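/- For a square {0,1}-matrix A^G obtained as A^G = S_A R_A where A = R_A S_A, the map induced by S_Aᵗ gives an isomorphism of abelian groups ℤ^{N_A}/(id − (A^G)ᵗ)ℤ^{N_A} → ℤ^N/(id − Aᵗ)ℤ^N, with inverse induced by R_Aᵗ. -/

import Mathlib

lemma aux_intertwine {N K : ℕ} (R : Matrix (Fin N) (Fin K) ℤ) (S : Matrix (Fin K) (Fin N) ℤ) :
    S.transpose * (1 - (S * R).transpose) = (1 - (R * S).transpose) * S.transpose := by
  simp only [Matrix.transpose_mul]
  rw [Matrix.mul_sub, Matrix.sub_mul, Matrix.mul_one, Matrix.one_mul, Matrix.mul_assoc]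

lemma aux_le {N K : ℕ} (R : Matrix (Fin N) (Fin K) ℤ) (S : Matrix (Fin K) (Fin N) ℤ) :
    LinearMap.range (1 - (S * R).transpose).mulVecLin ≤
      Submodule.comap S.transpose.mulVecLin
        (LinearMap.range (1 - (R * S).transpose).mulVecLin) := by
  rintro x ⟨v, rfl⟩
  refine ⟨S.transpose.mulVecLin v, ?_⟩
  have := congrArg Matrix.mulVecLin (aux_intertwine R S)
  simp only [Matrix.mulVecLin_mul] at this
  exact (LinearMap.congr_fun this v).symm

/-- For `A = R * S` and `A^G = S * R` (with `R`, `S` nonnegative), the map induced by `Sᵗ`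
is an isomorphism of abelian groups
`ℤᴷ/(id - (A^G)ᵗ)ℤᴷ → ℤᴺ/(id - Aᵗ)ℤᴺ`, with inverse induced by `Rᵗ`. -/
theorem stmt_12 (N K : ℕ) (R : Matrix (Fin N) (Fin K) ℤ) (S : Matrix (Fin K) (Fin N) ℤ)
    (hR : ∀ i k, 0 ≤ R i k) (hS : ∀ k i, 0 ≤ S k i)
    (A : Matrix (Fin N) (Fin N) ℤ) (AG : Matrix (Fin K) (Fin K) ℤ)
    (hA : A = R * S) (hAG : AG = S * R) :
    ∃ (φ : ((Fin K → ℤ) ⧸ LinearMap.range (1 - AG.transpose).mulVecLin) →ₗ[ℤ]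
           ((Fin N → ℤ) ⧸ LinearMap.range (1 - A.transpose).mulVecLin))
      (ψ : ((Fin N → ℤ) ⧸ LinearMap.range (1 - A.transpose).mulVecLin) →ₗ[ℤ]
           ((Fin K → ℤ) ⧸ LinearMap.range (1 - AG.transpose).mulVecLin)),
      (∀ v : Fin K → ℤ,
        φ (Submodule.Quotient.mk v) = Submodule.Quotient.mk (S.transpose.mulVecLin v)) ∧
      (∀ w : Fin N → ℤ,
        ψ (Submodule.Quotient.mk w) = Submodule.Quotient.mk (R.transpose.mulVecLin w)) ∧
      φ.comp ψ = LinearMap.id ∧ ψ.comp φ = LinearMap.id := by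
  subst hA hAG
  refine ⟨Submodule.mapQ _ _ S.transpose.mulVecLin (aux_le R S),
          Submodule.mapQ _ _ R.transpose.mulVecLin (aux_le S R),
          fun v => rfl, fun w => rfl, ?_, ?_⟩
  · refine LinearMap.ext fun x => ?_
    obtain ⟨w, rfl⟩ := Submodule.Quotient.mk_surjective _ x
    show Submodule.Quotient.mk (S.transpose.mulVecLin (R.transpose.mulVecLin w)) =
      Submodule.Quotient.mk w
    rw [Submodule.Quotient.eq]
    refine ⟨-w, ?_⟩
    simp [Matrix.mulVecLin_apply, Matrix.sub_mulVec, Matrix.one_mulVec,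
      Matrix.mulVec_neg, Matrix.transpose_mul, Matrix.mulVec_mulVec]
    abel
  · refine LinearMap.ext fun x => ?_
    obtain ⟨w, rfl⟩ := Submodule.Quotient.mk_surjective _ x
    show Submodule.Quotient.mk (R.transpose.mulVecLin (S.transpose.mulVecLin w)) =
      Submodule.Quotient.mk w
    rw [Submodule.Quotient.eq]
    refine ⟨-w, ?_⟩
    simp [Matrix.mulVecLin_apply, Matrix.sub_mulVec, Matrix.one_mulVec,
      Matrix.mulVec_neg, Matrix.transpose_mul, Matrix.mulVec_mulVec]
    abel
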